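/- arXiv:2410.10292 — 2 statements merged into one kernel-verified Lean document; each statement's English description precedes it below -/
import Mathlib

section
/- Let A ∈ R and suppose that for every a ∈ ℝ^d there exists u₁ > 0 such that (u+u₁)A ⊆ uA + a ⊆ (u−u₁)A for all u > u₁ (the translation-sandwich property). Let X be a random vector with Y_A := sup{u > 0 : X ∈ uA} and P[X ∈ xA] = P[Y_A > x], and assume the distribution of Y_A is long-tailed. Then for every a ∈ ℝ^d, lim_{x→∞} P[X ∈ xA + a] / P[X ∈ xA] = 1. -/
open Filter Topology MeasureTheory

/-- If the translation-sandwich property holds for `A` and the distribution of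
`Y_A` is long-tailed, then `P[X ∈ xA + a] ∼ P[X ∈ xA]` for every `a`. -/
theorem stmt_11 {Ω : Type*} [MeasurableSpace Ω] (μ : Measure Ω)
    [IsProbabilityMeasure μ] {d : ℕ}
    (A : Set (Fin d → ℝ)) (X : Ω → Fin d → ℝ)
    (hopen : IsOpen A)
    (hinc : ∀ y ∈ A, ∀ a : Fin d → ℝ, (∀ i, 0 ≤ a i) → y + a ∈ A)
    (hconv : Convex ℝ Aᶜ)
    (h0 : (0 : Fin d → ℝ) ∉ closure A)
    (hsand : ∀ a : Fin d → ℝ, ∃ u₁ : ℝ, 0 < u₁ ∧ ∀ u : ℝ, u₁ < u →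
      (fun y => (u + u₁) • y) '' A ⊆ (fun y => u • y + a) '' A ∧
      (fun y => u • y + a) '' A ⊆ (fun y => (u - u₁) • y) '' A)
    (P : ℝ → ℝ)
    (hP : ∀ x : ℝ, P x = (μ {ω | X ω ∈ (fun y => x • y) '' A}).toReal)
    (hpos : ∀ x, 0 < P x)
    (hlong : ∀ u : ℝ, 0 < u →
      Tendsto (fun x => P (x - u) / P x) atTop (nhds 1)) :
    ∀ a : Fin d → ℝ,
      Tendsto (fun x =>
          (μ {ω | X ω ∈ (fun y => x • y + a) '' A}).toReal / P x)
        atTop (nhds 1) := by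
  intro a
  obtain ⟨u₁, hu₁, hs⟩ := hsand a
  set Q : ℝ → ℝ := fun x => (μ {ω | X ω ∈ (fun y => x • y + a) '' A}).toReal with hQ
  -- lower limit: P (x + u₁) / P x → 1
  have hlow : Tendsto (fun x => P (x + u₁) / P x) atTop (nhds 1) := by
    have h1 : Tendsto (fun x => P x / P (x + u₁)) atTop (nhds 1) := by
      have := (hlong u₁ hu₁).comp (tendsto_atTop_add_const_right atTop u₁ tendsto_id)
      simpa [Function.comp_def, add_sub_cancel_right] using this
    have h2 := h1.inv₀ one_ne_zero
    simpa [inv_div] using h2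
  have hhigh : Tendsto (fun x => P (x - u₁) / P x) atTop (nhds 1) := hlong u₁ hu₁
  apply tendsto_of_tendsto_of_tendsto_of_le_of_le' hlow hhigh
  · filter_upwards [eventually_gt_atTop u₁] with x hx
    have hsub := (hs x hx).1
    have : P (x + u₁) ≤ Q x := by
      rw [hP]
      refine ENNReal.toReal_mono (measure_ne_top μ _) ?_
      exact measure_mono fun ω hω => hsub hω
    exact div_le_div_of_nonneg_right this (hpos x).le
  · filter_upwards [eventually_gt_atTop u₁] with x hx
    have hsub := (hs x hx).2
    have : Q x ≤ P (x - u₁) := by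
      rw [hP]
      refine ENNReal.toReal_mono (measure_ne_top μ _) ?_
      exact measure_mono fun ω hω => hsub hω
    exact div_le_div_of_nonneg_right this (hpos x).le
end

section
/- Let Y₁, Y₂ be independent nonnegative random variables with dominatedly varying distributions F₁, F₂. Then P[Y₁ + Y₂ > x] ≍ F̄₁(x) + F̄₂(x) as x → ∞, i.e. there exist 0 < c ≤ C < ∞ with c(F̄₁(x)+F̄₂(x)) ≤ P[Y₁+Y₂ > x] ≤ C(F̄₁(x)+F̄₂(x)) for all large x; moreover the distribution of Y₁ + Y₂ is dominatedly varying. -/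
open Filter Topology MeasureTheory ProbabilityTheory

/-- For independent nonnegative `Y₁, Y₂` with dominatedly varying tails,
`P[Y₁+Y₂ > x] ≍ F̄₁(x)+F̄₂(x)` and the sum is dominatedly varying. -/
theorem stmt_13 {Ω : Type*} [MeasurableSpace Ω] (μ : Measure Ω)
    [IsProbabilityMeasure μ]
    (Y1 Y2 : Ω → ℝ) (hY1 : ∀ ω, 0 ≤ Y1 ω) (hY2 : ∀ ω, 0 ≤ Y2 ω)
    (hmeas1 : Measurable Y1) (hmeas2 : Measurable Y2)
    (hind : IndepFun Y1 Y2 μ)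
    (hpos1 : ∀ x : ℝ, 0 < (μ {ω | Y1 ω > x}).toReal)
    (hpos2 : ∀ x : ℝ, 0 < (μ {ω | Y2 ω > x}).toReal)
    (hD1 : ∀ b : ℝ, 0 < b → b < 1 → ∃ C : ℝ, ∀ᶠ x in atTop,
      (μ {ω | Y1 ω > b * x}).toReal / (μ {ω | Y1 ω > x}).toReal ≤ C)
    (hD2 : ∀ b : ℝ, 0 < b → b < 1 → ∃ C : ℝ, ∀ᶠ x in atTop,
      (μ {ω | Y2 ω > b * x}).toReal / (μ {ω | Y2 ω > x}).toReal ≤ C) :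
    (∃ c C : ℝ, 0 < c ∧ c ≤ C ∧ ∀ᶠ x in atTop,
      c * ((μ {ω | Y1 ω > x}).toReal + (μ {ω | Y2 ω > x}).toReal)
        ≤ (μ {ω | Y1 ω + Y2 ω > x}).toReal ∧
      (μ {ω | Y1 ω + Y2 ω > x}).toReal
        ≤ C * ((μ {ω | Y1 ω > x}).toReal + (μ {ω | Y2 ω > x}).toReal)) ∧
    (∀ b : ℝ, 0 < b → b < 1 → ∃ C : ℝ, ∀ᶠ x in atTop,
      (μ {ω | Y1 ω + Y2 ω > b * x}).toReal / (μ {ω | Y1 ω + Y2 ω > x}).toReal ≤ C) := by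
  -- basic nonnegativity of all tail probabilities
  -- key1 : F̄₁(x) ≤ P[sum > x]
  have key1 : ∀ x : ℝ, (μ {ω | Y1 ω > x}).toReal ≤ (μ {ω | Y1 ω + Y2 ω > x}).toReal := by
    intro x
    refine ENNReal.toReal_mono (measure_ne_top _ _) (measure_mono ?_)
    intro ω hω
    have := hY2 ω
    simp only [Set.mem_setOf_eq] at *
    linarith
  have key2 : ∀ x : ℝ, (μ {ω | Y2 ω > x}).toReal ≤ (μ {ω | Y1 ω + Y2 ω > x}).toReal := by
    intro x
    refine ENNReal.toReal_mono (measure_ne_top _ _) (measure_mono ?_)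
    intro ω hω
    have := hY1 ω
    simp only [Set.mem_setOf_eq] at *
    linarith
  -- splitting: if y + y ≤ x then P[sum > x] ≤ F̄₁(y) + F̄₂(y)
  have split : ∀ x y : ℝ, y + y ≤ x →
      (μ {ω | Y1 ω + Y2 ω > x}).toReal
        ≤ (μ {ω | Y1 ω > y}).toReal + (μ {ω | Y2 ω > y}).toReal := by
    intro x y hxy
    have hsub : {ω | Y1 ω + Y2 ω > x} ⊆ {ω | Y1 ω > y} ∪ {ω | Y2 ω > y} := by
      intro ω hω
      simp only [Set.mem_setOf_eq, Set.mem_union] at *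
      by_contra h
      push_neg at h
      linarith [h.1, h.2]
    have h3 : μ {ω | Y1 ω + Y2 ω > x} ≤ μ {ω | Y1 ω > y} + μ {ω | Y2 ω > y} :=
      le_trans (measure_mono hsub) (measure_union_le _ _)
    rw [← ENNReal.toReal_add (measure_ne_top _ _) (measure_ne_top _ _)]
    exact ENNReal.toReal_mono (ENNReal.add_ne_top.mpr ⟨measure_ne_top _ _, measure_ne_top _ _⟩) h3
  constructor
  · -- part 1
    obtain ⟨C1, hC1⟩ := hD1 (1/2) (by norm_num) (by norm_num)
    obtain ⟨C2, hC2⟩ := hD2 (1/2) (by norm_num) (by norm_num)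
    obtain ⟨x1, hx1⟩ := hC1.exists
    obtain ⟨x2, hx2⟩ := hC2.exists
    have hC1nn : 0 ≤ C1 := le_trans (div_nonneg ENNReal.toReal_nonneg ENNReal.toReal_nonneg) hx1
    have hC2nn : 0 ≤ C2 := le_trans (div_nonneg ENNReal.toReal_nonneg ENNReal.toReal_nonneg) hx2
    refine ⟨1/2, max (max C1 C2) (1/2), by norm_num, le_max_right _ _, ?_⟩
    filter_upwards [hC1, hC2] with x h1 h2
    constructor
    · linarith [key1 x, key2 x]
    · have hb1 : (μ {ω | Y1 ω > (1/2) * x}).toReal ≤ C1 * (μ {ω | Y1 ω > x}).toReal :=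
        (div_le_iff₀ (hpos1 x)).mp h1
      have hb2 : (μ {ω | Y2 ω > (1/2) * x}).toReal ≤ C2 * (μ {ω | Y2 ω > x}).toReal :=
        (div_le_iff₀ (hpos2 x)).mp h2
      have hsplit := split x ((1/2) * x) (by linarith)
      have hM1 : C1 ≤ max (max C1 C2) (1/2) := le_trans (le_max_left _ _) (le_max_left _ _)
      have hM2 : C2 ≤ max (max C1 C2) (1/2) := le_trans (le_max_right _ _) (le_max_left _ _)
      nlinarith [hpos1 x, hpos2 x, ENNReal.toReal_nonneg (a := μ {ω | Y1 ω > (1/2) * x}),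
        ENNReal.toReal_nonneg (a := μ {ω | Y2 ω > (1/2) * x})]
  · -- part 2: dominated variation of the sum
    intro b hb0 hb1
    obtain ⟨C1, hC1⟩ := hD1 (b/2) (by linarith) (by linarith)
    obtain ⟨C2, hC2⟩ := hD2 (b/2) (by linarith) (by linarith)
    obtain ⟨x1, hx1⟩ := hC1.exists
    obtain ⟨x2, hx2⟩ := hC2.exists
    have hC1nn : 0 ≤ C1 := le_trans (div_nonneg ENNReal.toReal_nonneg ENNReal.toReal_nonneg) hx1
    have hC2nn : 0 ≤ C2 := le_trans (div_nonneg ENNReal.toReal_nonneg ENNReal.toReal_nonneg) hx2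
    refine ⟨C1 + C2, ?_⟩
    filter_upwards [hC1, hC2] with x h1 h2
    have hS : 0 < (μ {ω | Y1 ω + Y2 ω > x}).toReal := lt_of_lt_of_le (hpos1 x) (key1 x)
    rw [div_le_iff₀ hS]
    have hb1' : (μ {ω | Y1 ω > (b/2) * x}).toReal ≤ C1 * (μ {ω | Y1 ω > x}).toReal :=
      (div_le_iff₀ (hpos1 x)).mp h1
    have hb2' : (μ {ω | Y2 ω > (b/2) * x}).toReal ≤ C2 * (μ {ω | Y2 ω > x}).toReal :=
      (div_le_iff₀ (hpos2 x)).mp h2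
    have hsplit := split (b * x) ((b/2) * x) (by linarith)
    nlinarith [key1 x, key2 x, hpos1 x, hpos2 x]
end
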